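/- arXiv:2311.05264 — 7 statements merged into one kernel-verified Lean document; each statement's English description precedes it below -/
import Mathlib

section
/- Let λ_T, η_T ∈ ℝ^n, T > 0, and define η(t) = λ_T + (η_T − λ_T)·e^{t−T} for t ∈ ℝ. Then there exists t ∈ (0, T] with η(t) = 0 if and only if ‖λ_T‖·‖η_T‖ = −⟨λ_T, η_T⟩ and e^{−T} < ‖λ_T‖/(‖λ_T‖ + ‖η_T‖). -/
open Real

theorem stmt_0 (n : ℕ) (lamT etaT : EuclideanSpace ℝ (Fin n)) (T : ℝ) (hT : 0 < T)
    (hne : lamT ≠ 0 ∨ etaT ≠ 0) :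
    (∃ t ∈ Set.Ioc (0 : ℝ) T, lamT + Real.exp (t - T) • (etaT - lamT) = 0) ↔
      (‖lamT‖ * ‖etaT‖ = -(inner ℝ lamT etaT : ℝ) ∧
        Real.exp (-T) < ‖lamT‖ / (‖lamT‖ + ‖etaT‖)) := by
  constructor
  · rintro ⟨t, ⟨ht0, htT⟩, heq⟩
    set c := Real.exp (t - T) with hc
    have hc0 : 0 < c := Real.exp_pos _
    have hc1 : c ≤ 1 := by
      rw [hc, Real.exp_le_one_iff]; linarith
    have hcT : Real.exp (-T) < c := Real.exp_lt_exp.mpr (by linarith)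
    have hlam : lamT ≠ 0 := by
      intro h
      rw [h] at heq
      simp only [zero_add, sub_zero, smul_eq_zero] at heq
      rcases heq with h' | h'
      · exact absurd h' (ne_of_gt hc0)
      · rcases hne with h2 | h2 <;> [exact h2 h; exact h2 h']
    set s := (1 - c) / c with hs
    have hs0 : 0 ≤ s := div_nonneg (by linarith) hc0.le
    have hcs : c * (1 + s) = 1 := by rw [hs]; field_simp; ring
    have heta : etaT = (-s) • lamT := by
      have h2 : c • etaT = (c - 1) • lamT := by
        have h3 : lamT + (c • etaT - c • lamT) = 0 := by rw [← smul_sub]; exact heq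
        have h4 : c • etaT = c • lamT - lamT := by
          rw [eq_sub_iff_add_eq]
          calc c • etaT + lamT = lamT + (c • etaT - c • lamT) + c • lamT := by abel
            _ = c • lamT := by rw [h3, zero_add]
        rw [h4, sub_smul, one_smul]
      have := congrArg (fun v => c⁻¹ • v) h2
      simp only [smul_smul, inv_mul_cancel₀ (ne_of_gt hc0), one_smul] at this
      rw [this]
      have hval : c⁻¹ * (c - 1) = -s := by
        rw [hs]
        field_simp
        ring
      rw [hval]
    have hnorm : ‖etaT‖ = s * ‖lamT‖ := by
      rw [heta, norm_smul, Real.norm_eq_abs, abs_neg, abs_of_nonneg hs0]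
    have hinner : (inner ℝ lamT etaT : ℝ) = -s * ‖lamT‖ ^ 2 := by
      rw [heta, real_inner_smul_right, real_inner_self_eq_norm_sq]
    constructor
    · rw [hnorm, hinner]; ring
    · have hlam0 : 0 < ‖lamT‖ := norm_pos_iff.mpr hlam
      have : ‖lamT‖ / (‖lamT‖ + ‖etaT‖) = c := by
        rw [hnorm]
        rw [show ‖lamT‖ + s * ‖lamT‖ = (1 + s) * ‖lamT‖ by ring]
        rw [div_eq_iff (by positivity)]
        nlinarith [hcs]
      rw [this]; exact hcT
  · rintro ⟨hinner, hlt⟩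
    have hlam : lamT ≠ 0 := by
      intro h
      rw [h] at hlt
      simp only [norm_zero, zero_div] at hlt
      linarith [Real.exp_pos (-T)]
    have hlam0 : 0 < ‖lamT‖ := norm_pos_iff.mpr hlam
    have key : ‖etaT‖ • lamT = ‖lamT‖ • (-etaT) := by
      have : (inner ℝ lamT (-etaT) : ℝ) = ‖lamT‖ * ‖-etaT‖ := by
        rw [inner_neg_right, norm_neg, ← hinner]
      have := inner_eq_norm_mul_iff_real.mp this
      rwa [norm_neg] at this
    set s := ‖etaT‖ / ‖lamT‖ with hs
    have hs0 : 0 ≤ s := div_nonneg (norm_nonneg _) hlam0.le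
    have heta : etaT = (-s) • lamT := by
      have := congrArg (fun v => (‖lamT‖⁻¹ : ℝ) • v) key
      simp only [smul_smul] at this
      rw [inv_mul_cancel₀ (ne_of_gt hlam0), one_smul] at this
      rw [← neg_eq_iff_eq_neg] at this
      rw [← this, ← neg_smul]
      congr 1
      rw [hs, div_eq_inv_mul]
    set c := 1 / (1 + s) with hc
    have h1s : 0 < 1 + s := by linarith
    have hc0 : 0 < c := by positivity
    have hc1 : c ≤ 1 := by
      rw [hc]; rw [div_le_one h1s]; linarith
    have hnorm : ‖etaT‖ = s * ‖lamT‖ := by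
      rw [hs]; field_simp
    have hclt : Real.exp (-T) < c := by
      have : ‖lamT‖ / (‖lamT‖ + ‖etaT‖) = c := by
        rw [hnorm, hc]
        rw [show ‖lamT‖ + s * ‖lamT‖ = (1 + s) * ‖lamT‖ by ring]
        rw [div_eq_div_iff (ne_of_gt (by positivity)) (ne_of_gt h1s)]
        ring
      rwa [this] at hlt
    refine ⟨T + Real.log c, ⟨?_, ?_⟩, ?_⟩
    · have : -T < Real.log c := (Real.lt_log_iff_exp_lt hc0).mpr hclt
      linarith
    · have : Real.log c ≤ 0 := Real.log_nonpos hc0.le hc1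
      linarith
    · have hexp : Real.exp (T + Real.log c - T) = c := by
        rw [show T + Real.log c - T = Real.log c by ring, Real.exp_log hc0]
      rw [hexp, heta]
      have hcs : c * (1 + s) = 1 := by rw [hc]; field_simp
      have : lamT + c • ((-s) • lamT - lamT) = (1 + (c * (-s) - c)) • lamT := by
        module
      rw [this, show 1 + (c * (-s) - c) = 1 - c * (1 + s) by ring, hcs, sub_self, zero_smul]
end

section
/- Let λ_T, η_T ∈ ℝ^n with λ_T ≠ 0, satisfying ‖λ_T‖·‖η_T‖ = −⟨λ_T, η_T⟩ and e^{−T} < ‖λ_T‖/(‖λ_T‖ + ‖η_T‖) for some T > 0. Define η(t) = λ_T + (η_T − λ_T)e^{t−T}. Then the unique zero of η on (0, T] is t = θ := T + ln(‖λ_T‖/(‖λ_T‖ + ‖η_T‖)). -/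
open Real

theorem stmt_1 (n : ℕ) (lamT etaT : EuclideanSpace ℝ (Fin n)) (hlam : lamT ≠ 0)
    (T : ℝ) (hT : 0 < T)
    (hanti : ‖lamT‖ * ‖etaT‖ = -(inner ℝ lamT etaT : ℝ))
    (hcond : Real.exp (-T) < ‖lamT‖ / (‖lamT‖ + ‖etaT‖))
    (θ : ℝ) (hθ : θ = T + Real.log (‖lamT‖ / (‖lamT‖ + ‖etaT‖))) :
    θ ∈ Set.Ioc (0 : ℝ) T ∧
      ∀ t ∈ Set.Ioc (0 : ℝ) T,
        (lamT + Real.exp (t - T) • (etaT - lamT) = 0 ↔ t = θ) := by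
  have ha : 0 < ‖lamT‖ := norm_pos_iff.mpr hlam
  have hb : 0 ≤ ‖etaT‖ := norm_nonneg _
  have hs : 0 < ‖lamT‖ + ‖etaT‖ := by linarith
  have hratio_pos : 0 < ‖lamT‖ / (‖lamT‖ + ‖etaT‖) := div_pos ha hs
  have hratio_le : ‖lamT‖ / (‖lamT‖ + ‖etaT‖) ≤ 1 := by
    rw [div_le_one hs]; linarith
  have hlog_le : Real.log (‖lamT‖ / (‖lamT‖ + ‖etaT‖)) ≤ 0 :=
    Real.log_nonpos (le_of_lt hratio_pos) hratio_le
  have hlog_gt : -T < Real.log (‖lamT‖ / (‖lamT‖ + ‖etaT‖)) :=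
    (Real.lt_log_iff_exp_lt hratio_pos).mpr hcond
  have hθmem : θ ∈ Set.Ioc (0 : ℝ) T := by
    constructor
    · rw [hθ]; linarith
    · rw [hθ]; linarith
  -- equality case of Cauchy-Schwarz
  have hinner : (inner ℝ lamT (-etaT) : ℝ) = ‖lamT‖ * ‖-etaT‖ := by
    rw [inner_neg_right, norm_neg]; linarith
  have heq : ‖-etaT‖ • lamT = ‖lamT‖ • (-etaT) := inner_eq_norm_mul_iff_real.mp hinner
  have h2 : ‖lamT‖ • etaT = (-‖etaT‖) • lamT := by
    rw [norm_neg] at heq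
    calc ‖lamT‖ • etaT = -(‖lamT‖ • (-etaT)) := by simp
      _ = -(‖etaT‖ • lamT) := by rw [heq]
      _ = (-‖etaT‖) • lamT := by rw [neg_smul]
  have heta : etaT = (-(‖etaT‖ / ‖lamT‖)) • lamT := by
    have h3 := congrArg (fun v : EuclideanSpace ℝ (Fin n) => (‖lamT‖)⁻¹ • v) h2
    simp only [smul_smul, inv_mul_cancel₀ (ne_of_gt ha), one_smul] at h3
    have h4 : (-(‖etaT‖ / ‖lamT‖)) = ‖lamT‖⁻¹ * -‖etaT‖ := by ring
    rw [h4]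
    exact h3
  refine ⟨hθmem, fun t ht => ?_⟩
  have key : lamT + Real.exp (t - T) • (etaT - lamT)
      = (1 + Real.exp (t - T) * (-(‖etaT‖ / ‖lamT‖) - 1)) • lamT := by
    conv_lhs => rw [heta]
    module
  rw [key, smul_eq_zero]
  constructor
  · rintro (hc | hc)
    · -- coefficient is zero
      have hexp : Real.exp (t - T) = ‖lamT‖ / (‖lamT‖ + ‖etaT‖) := by
        field_simp at hc
        rw [eq_div_iff (ne_of_gt hs)]
        linarith
      have := Real.log_exp (t - T)
      rw [hexp] at this
      rw [hθ]; linarith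
    · exact absurd hc hlam
  · intro htθ
    left
    have : Real.exp (t - T) = ‖lamT‖ / (‖lamT‖ + ‖etaT‖) := by
      rw [htθ, hθ]
      rw [show T + Real.log (‖lamT‖ / (‖lamT‖ + ‖etaT‖)) - T = Real.log (‖lamT‖ / (‖lamT‖ + ‖etaT‖)) by ring]
      exact Real.exp_log hratio_pos
    rw [this]
    field_simp
    ring
end

section
/- Fix t ≥ 0, h ∈ ℝ^n, v ≥ 0, ℓ ≥ 0 with ‖h‖ − (t − 1 + e^{−t}) > ℓ. Then θ* := t + (‖h‖ + 1 − ℓ − t)/(1 + v) + W₀(−e^{−(1 + v·t − ℓ + ‖h‖)/(1 + v)}/(1 + v)) satisfies ‖h‖ − (θ* − 1 + e^{−θ*}) = v·(θ* − t) + ℓ, where W₀ is the principal branch of the Lambert W function. -/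
open Real

/-- the best universal lower estimator for position-space interception,
expressed via the principal branch `W0` of the Lambert W function
(characterized by `W0 x * exp (W0 x) = x` and `W0 x ≥ -1` for `x ≥ -1/e`). -/
theorem stmt_4 (n : ℕ) (t : ℝ) (ht : 0 ≤ t) (h : EuclideanSpace ℝ (Fin n))
    (v : ℝ) (hv : 0 ≤ v) (ℓ : ℝ) (hℓ : 0 ≤ ℓ)
    (hgt : ‖h‖ - (t - 1 + Real.exp (-t)) > ℓ)
    (W0 : ℝ → ℝ)
    (hW0 : ∀ x, -Real.exp (-1) ≤ x → W0 x * Real.exp (W0 x) = x ∧ -1 ≤ W0 x)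
    (θ : ℝ)
    (hθ : θ = t + (‖h‖ + 1 - ℓ - t) / (1 + v) +
      W0 (-(Real.exp (-((1 + v * t - ℓ + ‖h‖) / (1 + v)))) / (1 + v))) :
    ‖h‖ - (θ - 1 + Real.exp (-θ)) = v * (θ - t) + ℓ := by
  have hc : (0:ℝ) < 1 + v := by linarith
  set a : ℝ := (1 + v * t - ℓ + ‖h‖) / (1 + v) with ha
  set x : ℝ := -(Real.exp (-a)) / (1 + v) with hx
  have hθa : θ = a + W0 x := by
    rw [hθ, ha]; field_simp; ring
  have hA1 : 1 ≤ 1 + v * t - ℓ + ‖h‖ := by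
    have h1 : 1 - t ≤ Real.exp (-t) := by linarith [Real.add_one_le_exp (-t)]
    have h2 : ℓ ≤ ‖h‖ := by nlinarith
    nlinarith [mul_nonneg hv ht]
  have ha1 : 1 / (1 + v) ≤ a := by
    rw [ha]; gcongr
  have hexp : Real.exp (-a) ≤ (1 + v) * Real.exp (-1) := by
    have h3 : 1 / (1 + v) ≤ Real.exp (-(v / (1 + v))) := by
      have he := Real.add_one_le_exp (-(v / (1 + v)))
      have heq : -(v / (1 + v)) + 1 = 1 / (1 + v) := by field_simp; ring
      linarith
    have h2 : Real.exp (v / (1 + v)) ≤ 1 + v := by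
      have hpos : (0:ℝ) < Real.exp (-(v / (1 + v))) := Real.exp_pos _
      have hprod : Real.exp (v / (1 + v)) * Real.exp (-(v / (1 + v))) = 1 := by
        rw [← Real.exp_add]; simp
      have h3' : 1 ≤ (1 + v) * Real.exp (-(v / (1 + v))) := by
        rw [← div_le_iff₀' hc]; exact h3
      nlinarith
    calc Real.exp (-a) ≤ Real.exp (-(1 / (1 + v))) := by
          apply Real.exp_le_exp.mpr; linarith
      _ = Real.exp (v / (1 + v)) * Real.exp (-1) := by
          rw [← Real.exp_add]; congr 1; field_simp; ring
      _ ≤ (1 + v) * Real.exp (-1) := by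
          apply mul_le_mul_of_nonneg_right h2 (Real.exp_pos _).le
  have hx1 : -Real.exp (-1) ≤ x := by
    rw [hx, neg_div, neg_le_neg_iff, div_le_iff₀ hc]
    linarith
  obtain ⟨hW, -⟩ := hW0 x hx1
  set w := W0 x with hw
  have h4 : Real.exp (-a) = -((1 + v) * (w * Real.exp w)) := by
    rw [hW, hx]; field_simp
  have hew : Real.exp (-θ) = -(1 + v) * w := by
    have h5 : Real.exp (-θ) = Real.exp (-a) * Real.exp (-w) := by
      rw [hθa, ← Real.exp_add]; ring_nf
    rw [h5, h4, Real.exp_neg]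
    field_simp
  have hθeq : (1 + v) * θ = (1 + v * t - ℓ + ‖h‖) + (1 + v) * w := by
    rw [hθa, ha]; field_simp
  rw [hew]
  linear_combination -hθeq
end

section
/- Fix t ≥ 0, h ∈ ℝ^n, v > 0, ℓ ≥ 0 with ‖h‖ − (1 − e^{−t}) > ℓ. Then θ* := t + (‖h‖ − 1 − ℓ)/v + W₀((1/v)·e^{−t + (1 + ℓ − ‖h‖)/v}) satisfies ‖h‖ − (1 − e^{−θ*}) = v·(θ* − t) + ℓ and θ* ≥ t, where W₀ is the principal branch of the Lambert W function. -/
open Real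

/-- the best universal lower estimator for velocity-space interception,
expressed via the principal branch `W0` of the Lambert W function. -/
theorem stmt_5 (n : ℕ) (t : ℝ) (ht : 0 ≤ t) (h : EuclideanSpace ℝ (Fin n))
    (v : ℝ) (hv : 0 < v) (ℓ : ℝ) (hℓ : 0 ≤ ℓ)
    (hgt : ‖h‖ - (1 - Real.exp (-t)) > ℓ)
    (W0 : ℝ → ℝ)
    (hW0 : ∀ x, -Real.exp (-1) ≤ x → W0 x * Real.exp (W0 x) = x ∧ -1 ≤ W0 x)
    (θ : ℝ)
    (hθ : θ = t + (‖h‖ - 1 - ℓ) / v +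
      W0 ((1 / v) * Real.exp (-t + (1 + ℓ - ‖h‖) / v))) :
    ‖h‖ - (1 - Real.exp (-θ)) = v * (θ - t) + ℓ ∧ t ≤ θ := by
  have hv' : v ≠ 0 := ne_of_gt hv
  set x : ℝ := (1 / v) * Real.exp (-t + (1 + ℓ - ‖h‖) / v) with hx
  have hxpos : 0 < x := by positivity
  obtain ⟨hwe, hw1⟩ := hW0 x (le_trans (by linarith [Real.exp_pos (-1:ℝ)]) hxpos.le)
  set w : ℝ := W0 x with hw
  have hewpos : 0 < Real.exp w := Real.exp_pos w
  have hwpos : 0 < w := by nlinarith [hxpos, hwe, hewpos]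
  have hexpθ : Real.exp (-θ) = v * w := by
    have h1 : -θ = (-t + (1 + ℓ - ‖h‖) / v) + (-w) := by rw [hθ]; ring
    rw [h1, Real.exp_add, Real.exp_neg]
    have h2 : Real.exp (-t + (1 + ℓ - ‖h‖) / v) = v * x := by
      rw [hx]; field_simp
    rw [h2]
    have h3 : x * (Real.exp w)⁻¹ = w := by
      rw [← hwe]; field_simp
    calc v * x * (Real.exp w)⁻¹ = v * (x * (Real.exp w)⁻¹) := by ring
      _ = v * w := by rw [h3]
  constructor
  · rw [hexpθ, hθ]
    field_simp
    ring
  · rw [hθ]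
    have key : (1 + ℓ - ‖h‖) / v ≤ w := by
      set a : ℝ := (1 + ℓ - ‖h‖) / v with ha
      rcases le_or_gt a 0 with hA | hA
      · linarith
      · by_contra hcon
        push_neg at hcon
        have hlt : Real.exp w < Real.exp a := Real.exp_lt_exp.mpr hcon
        have h4 : 1 + ℓ - ‖h‖ < Real.exp (-t) := by linarith
        have haexp : a < Real.exp (-t) / v := by rw [ha]; gcongr
        have hxe : x = Real.exp (-t) * Real.exp a / v := by
          rw [hx, Real.exp_add]; ring
        have h5 : w * Real.exp w < a * Real.exp a := by
          nlinarith [Real.exp_pos a]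
        have h6 : a * Real.exp a < Real.exp (-t) / v * Real.exp a :=
          mul_lt_mul_of_pos_right haexp (Real.exp_pos a)
        have h7 : Real.exp (-t) / v * Real.exp a = x := by rw [hxe]; ring
        linarith [hwe]
    have hz : (‖h‖ - 1 - ℓ) / v + (1 + ℓ - ‖h‖) / v = 0 := by ring
    linarith
end

section
/- Let v₀ ∈ ℝ^n with ‖v₀‖ ≤ 1 and let u : [0,∞) → ℝ^n be measurable with ‖u(t)‖ ≤ 1. Define v(t) = v₀e^{−t} + ∫₀ᵗ u(s)e^{s−t} ds and r(t) = ∫₀ᵗ v(s) ds. Then for every t ≥ 0, r(t) lies in the closed ball of radius t − 1 + e^{−t} centered at v₀(1 − e^{−t}). -/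
open Real

theorem stmt_12 (n : ℕ) (v₀ : EuclideanSpace ℝ (Fin n)) (hv₀ : ‖v₀‖ ≤ 1)
    (u : ℝ → EuclideanSpace ℝ (Fin n)) (hu_meas : Measurable u)
    (hu : ∀ t : ℝ, ‖u t‖ ≤ 1)
    (v : ℝ → EuclideanSpace ℝ (Fin n))
    (hv : ∀ t : ℝ, v t = Real.exp (-t) • v₀ +
      ∫ s in (0 : ℝ)..t, Real.exp (s - t) • u s)
    (r : ℝ → EuclideanSpace ℝ (Fin n))
    (hr : ∀ t : ℝ, r t = ∫ s in (0 : ℝ)..t, v s) :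
    ∀ t : ℝ, 0 ≤ t →
      r t ∈ Metric.closedBall ((1 - Real.exp (-t)) • v₀) (t - 1 + Real.exp (-t)) := by
  have hmeas : Measurable (fun τ => Real.exp τ • u τ) :=
    (Real.measurable_exp).smul hu_meas
  have hii : ∀ a b : ℝ, IntervalIntegrable (fun τ => Real.exp τ • u τ)
      MeasureTheory.volume a b := by
    intro a b
    rw [intervalIntegrable_iff]
    apply MeasureTheory.Measure.integrableOn_of_bounded (M := Real.exp (max a b))
      (by rw [Set.uIoc, Real.volume_Ioc]; exact ENNReal.ofReal_ne_top) hmeas.aestronglyMeasurable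
    filter_upwards [MeasureTheory.ae_restrict_mem measurableSet_uIoc] with τ hτ
    have hτle : τ ≤ max a b := hτ.2
    calc ‖Real.exp τ • u τ‖ = Real.exp τ * ‖u τ‖ := by
          rw [norm_smul, Real.norm_eq_abs, abs_of_pos (Real.exp_pos τ)]
      _ ≤ Real.exp (max a b) * 1 :=
          mul_le_mul (Real.exp_le_exp.2 hτle) (hu τ) (norm_nonneg _) (Real.exp_pos _).le
      _ = Real.exp (max a b) := mul_one _
  set F : ℝ → EuclideanSpace ℝ (Fin n) :=
    fun s => ∫ τ in (0:ℝ)..s, Real.exp τ • u τ with hF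
  have hFcont : Continuous F := intervalIntegral.continuous_primitive hii 0
  have hw : ∀ s : ℝ, (∫ τ in (0:ℝ)..s, Real.exp (τ - s) • u τ) = Real.exp (-s) • F s := by
    intro s
    rw [hF, ← intervalIntegral.integral_smul]
    apply intervalIntegral.integral_congr
    intro τ _
    simp only [smul_smul, ← Real.exp_add]
    ring_nf
  have hvF : ∀ s : ℝ, v s = Real.exp (-s) • v₀ + Real.exp (-s) • F s := by
    intro s; rw [hv s, hw s]
  have hvcont : Continuous v := by
    have : Continuous fun s => Real.exp (-s) • v₀ + Real.exp (-s) • F s := by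
      fun_prop
    exact this.congr fun s => (hvF s).symm
  -- bound on the forced part
  have hFbd : ∀ s : ℝ, 0 ≤ s → ‖Real.exp (-s) • F s‖ ≤ 1 - Real.exp (-s) := by
    intro s hs
    rw [← hw s]
    have hbd : ∀ᵐ τ ∂(MeasureTheory.volume.restrict (Set.uIoc (0:ℝ) s)),
        ‖Real.exp (τ - s) • u τ‖ ≤ Real.exp (τ - s) := by
      filter_upwards with τ
      rw [norm_smul, Real.norm_eq_abs, abs_of_pos (Real.exp_pos _)]
      exact mul_le_of_le_one_right (Real.exp_pos _).le (hu τ)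
    have hgi : IntervalIntegrable (fun τ => Real.exp (τ - s))
        MeasureTheory.volume 0 s := (Real.continuous_exp.comp (by continuity)).intervalIntegrable _ _
    have h1 := intervalIntegral.norm_integral_le_abs_of_norm_le hbd hgi
    have h2 : (∫ τ in (0:ℝ)..s, Real.exp (τ - s)) = 1 - Real.exp (-s) := by
      have := intervalIntegral.integral_comp_sub_right (a := (0:ℝ)) (b := s)
        (fun x => Real.exp x) s
      simp only [zero_sub, sub_self] at this
      rw [this, integral_exp, Real.exp_zero]
    rw [h2] at h1
    rwa [abs_of_nonneg (by simp [Real.exp_le_one_iff.2 (neg_nonpos.2 hs)])] at h1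
  intro t ht
  have hint1 : IntervalIntegrable (fun s => Real.exp (-s) • v₀)
      MeasureTheory.volume 0 t := (by fun_prop : Continuous _).intervalIntegrable _ _
  have hint2 : IntervalIntegrable (fun s => Real.exp (-s) • F s)
      MeasureTheory.volume 0 t := (by fun_prop : Continuous _).intervalIntegrable _ _
  have hexpint : (∫ s in (0:ℝ)..t, Real.exp (-s)) = 1 - Real.exp (-t) := by
    have := intervalIntegral.integral_comp_neg (a := (0:ℝ)) (b := t) (fun x => Real.exp x)
    simp only [neg_zero] at this
    rw [this, integral_exp, Real.exp_zero]
  have hrsplit : r t = (1 - Real.exp (-t)) • v₀ + ∫ s in (0:ℝ)..t, Real.exp (-s) • F s := by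
    rw [hr t]
    calc (∫ s in (0:ℝ)..t, v s)
        = ∫ s in (0:ℝ)..t, (Real.exp (-s) • v₀ + Real.exp (-s) • F s) :=
          intervalIntegral.integral_congr fun s _ => hvF s
      _ = (∫ s in (0:ℝ)..t, Real.exp (-s) • v₀) + ∫ s in (0:ℝ)..t, Real.exp (-s) • F s :=
          intervalIntegral.integral_add hint1 hint2
      _ = (1 - Real.exp (-t)) • v₀ + ∫ s in (0:ℝ)..t, Real.exp (-s) • F s := by
          rw [intervalIntegral.integral_smul_const, hexpint]
  rw [Metric.mem_closedBall, dist_eq_norm, hrsplit, add_sub_cancel_left]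
  have hbd : ∀ᵐ s ∂(MeasureTheory.volume.restrict (Set.uIoc (0:ℝ) t)),
      ‖Real.exp (-s) • F s‖ ≤ 1 - Real.exp (-s) := by
    filter_upwards [MeasureTheory.ae_restrict_mem measurableSet_uIoc] with s hs
    rw [Set.uIoc_of_le ht] at hs
    exact hFbd s hs.1.le
  have hgi : IntervalIntegrable (fun s => 1 - Real.exp (-s)) MeasureTheory.volume 0 t :=
    (by fun_prop : Continuous _).intervalIntegrable _ _
  have h1 := intervalIntegral.norm_integral_le_abs_of_norm_le hbd hgi
  have h2 : (∫ s in (0:ℝ)..t, (1 - Real.exp (-s))) = t - 1 + Real.exp (-t) := by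
    rw [intervalIntegral.integral_sub (intervalIntegrable_const)
      ((by fun_prop : Continuous fun s => Real.exp (-s)).intervalIntegrable _ _),
      hexpint]
    simp; ring
  rw [h2] at h1
  have hrad : 0 ≤ t - 1 + Real.exp (-t) := by
    nlinarith [Real.add_one_le_exp (-t)]
  rwa [abs_of_nonneg hrad] at h1
end

section
/- Let λ_T, η_T ∈ ℝ^n with λ_T ≠ 0 satisfy ‖λ_T‖·‖η_T‖ = −⟨λ_T, η_T⟩, and let T > 0 and θ = T + ln(‖λ_T‖/(‖λ_T‖ + ‖η_T‖)). Then for all t ∈ [0, T], ∫₀ᵗ (λ_T + (η_T − λ_T)e^{s−T})/‖λ_T + (η_T − λ_T)e^{s−T}‖ ds = (λ_T/‖λ_T‖)·(|θ| − |t − θ|), where the integrand is defined arbitrarily at the single point where the denominator vanishes. -/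
open Real MeasureTheory Set

/-- the integrand `‖·‖⁻¹ • ·` takes the junk value `0` at the single
point where the vector vanishes, matching "defined arbitrarily" there. -/
theorem stmt_15 (n : ℕ) (lamT etaT : EuclideanSpace ℝ (Fin n)) (hlam : lamT ≠ 0)
    (hanti : ‖lamT‖ * ‖etaT‖ = -(inner ℝ lamT etaT : ℝ))
    (T : ℝ) (hT : 0 < T)
    (θ : ℝ) (hθ : θ = T + Real.log (‖lamT‖ / (‖lamT‖ + ‖etaT‖))) :
    ∀ t ∈ Set.Icc (0 : ℝ) T,
      (∫ s in (0 : ℝ)..t,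
          ‖lamT + Real.exp (s - T) • (etaT - lamT)‖⁻¹ •
            (lamT + Real.exp (s - T) • (etaT - lamT))) =
        ((|θ| - |t - θ|) / ‖lamT‖) • lamT := by
  intro t ht
  obtain ⟨ht0, htT⟩ := ht
  have hnl : (0:ℝ) < ‖lamT‖ := norm_pos_iff.mpr hlam
  set a : ℝ := (‖lamT‖ + ‖etaT‖) / ‖lamT‖ with ha
  have ha0 : 0 < a := div_pos (by positivity) hnl
  -- anti-parallel: etaT = -(‖etaT‖/‖lamT‖) • lamT
  have heta : etaT = -(‖etaT‖ / ‖lamT‖) • lamT := by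
    have h : (inner ℝ lamT (-etaT) : ℝ) = ‖lamT‖ * ‖-etaT‖ := by
      rw [inner_neg_right, norm_neg]; linarith
    have h2 := inner_eq_norm_mul_iff_real.mp h
    rw [norm_neg, smul_neg] at h2
    -- h2 : ‖etaT‖ • lamT = -(‖lamT‖ • etaT)
    have h3 : (‖lamT‖ : ℝ) • etaT = -(‖etaT‖ • lamT) := by
      rw [h2, neg_neg]
    have := congrArg (fun v => (‖lamT‖⁻¹ : ℝ) • v) h3
    simpa [smul_smul, inv_mul_cancel₀ hnl.ne', neg_div, div_eq_inv_mul,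
      mul_comm] using this
  -- the vector is a scalar multiple of lamT
  have hvec : ∀ s : ℝ, lamT + Real.exp (s - T) • (etaT - lamT)
      = (1 - a * Real.exp (s - T)) • lamT := by
    intro s
    have hc : -a = -(‖etaT‖ / ‖lamT‖) - 1 := by
      rw [ha]; field_simp; ring
    have : etaT - lamT = (-a) • lamT := by
      rw [heta, hc, sub_smul, one_smul]
    rw [this, smul_smul, mul_comm, neg_mul, neg_smul, ← sub_eq_add_neg, sub_smul,
      one_smul]
  set f : ℝ → ℝ := fun s => 1 - a * Real.exp (s - T) with hf
  -- θ characterization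
  have hexpθ : a * Real.exp (θ - T) = 1 := by
    have hsum : (0:ℝ) < ‖lamT‖ + ‖etaT‖ := by positivity
    have : θ - T = Real.log (‖lamT‖ / (‖lamT‖ + ‖etaT‖)) := by rw [hθ]; ring
    rw [this, Real.exp_log (div_pos hnl hsum), ha]
    field_simp
  have hfθ : ∀ s : ℝ, f s = a * (Real.exp (θ - T) - Real.exp (s - T)) := by
    intro s; simp only [hf]; rw [mul_sub, hexpθ]
  have hfpos : ∀ s : ℝ, s < θ → 0 < f s := by
    intro s hs
    rw [hfθ]
    exact mul_pos ha0 (sub_pos.mpr (Real.exp_lt_exp.mpr (by linarith)))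
  have hfneg : ∀ s : ℝ, θ < s → f s < 0 := by
    intro s hs
    rw [hfθ]
    exact mul_neg_of_pos_of_neg ha0 (sub_neg.mpr (Real.exp_lt_exp.mpr (by linarith)))
  -- scalar integrand
  set h : ℝ → ℝ := fun s => (|f s| * ‖lamT‖)⁻¹ * f s with hh
  set k : ℝ → ℝ := fun s => if s < θ then ‖lamT‖⁻¹ else -‖lamT‖⁻¹ with hk
  have hhk : ∀ s : ℝ, s ≠ θ → h s = k s := by
    intro s hs
    rcases lt_or_gt_of_ne hs with hlt | hgt
    · have hp := hfpos s hlt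
      simp only [hh, hk, if_pos hlt, abs_of_pos hp]
      field_simp
    · have hp := hfneg s hgt
      simp only [hh, hk, if_neg (not_lt.mpr hgt.le), abs_of_neg hp]
      field_simp
      rw [div_self hp.ne]
  -- rewrite vector integral
  have step1 : (∫ s in (0:ℝ)..t,
        ‖lamT + Real.exp (s - T) • (etaT - lamT)‖⁻¹ •
          (lamT + Real.exp (s - T) • (etaT - lamT)))
      = ∫ s in (0:ℝ)..t, h s • lamT := by
    apply intervalIntegral.integral_congr
    intro s _
    dsimp only
    rw [hvec s]
    show ‖f s • lamT‖⁻¹ • (f s • lamT) = ((|f s| * ‖lamT‖)⁻¹ * f s) • lamT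
    rw [norm_smul, Real.norm_eq_abs, smul_smul]
  have step2 : (∫ s in (0:ℝ)..t, h s • lamT) = (∫ s in (0:ℝ)..t, h s) • lamT :=
    intervalIntegral.integral_smul_const h lamT
  -- integrability of k
  have hkmeas : Measurable k := by
    apply Measurable.ite _ measurable_const measurable_const
    exact measurableSet_Iio
  have hkint : IntervalIntegrable k volume 0 t := by
    apply IntervalIntegrable.mono_fun' (g := fun _ => ‖lamT‖⁻¹)
      intervalIntegrable_const hkmeas.aestronglyMeasurable
    filter_upwards with x
    simp only [hk]
    split <;> simp [abs_of_pos (inv_pos.mpr hnl), le_refl]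
  -- a.e. equality
  have stepae : (∫ s in (0:ℝ)..t, h s) = ∫ s in (0:ℝ)..t, k s := by
    apply intervalIntegral.integral_congr_ae
    have h1 : ∀ᵐ x : ℝ, x ≠ θ := by
      rw [MeasureTheory.ae_iff]
      have : {x : ℝ | ¬x ≠ θ} = {θ} := by ext x; simp
      rw [this]
      exact Real.volume_singleton
    filter_upwards [h1] with x hx _
    exact hhk x hx
  -- FTC
  set K : ℝ → ℝ := fun s => -‖lamT‖⁻¹ * |s - θ| with hK
  have hKcont : ContinuousOn K (Icc 0 t) := by
    apply Continuous.continuousOn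
    exact continuous_const.mul ((continuous_id.sub continuous_const).abs)
  have hKderiv : ∀ x ∈ Ioo (0:ℝ) t, HasDerivWithinAt K (k x) (Ioi x) x := by
    intro x _
    rcases lt_or_ge x θ with hx | hx
    · have hd : HasDerivAt (fun s : ℝ => -‖lamT‖⁻¹ * (θ - s)) (‖lamT‖⁻¹) x := by
        have := ((hasDerivAt_id x).const_sub θ).const_mul (-‖lamT‖⁻¹)
        simpa using this
      have hev : (fun s : ℝ => -‖lamT‖⁻¹ * (θ - s)) =ᶠ[nhds x] K := by
        filter_upwards [Iio_mem_nhds hx] with s hs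
        have hs' : s < θ := hs
        show -‖lamT‖⁻¹ * (θ - s) = -‖lamT‖⁻¹ * |s - θ|
        rw [abs_of_neg (sub_neg.mpr hs')]
        ring
      have := (hd.congr_of_eventuallyEq hev.symm).hasDerivWithinAt (s := Ioi x)
      simpa [hk, if_pos hx] using this
    · have hd : HasDerivWithinAt (fun s : ℝ => -‖lamT‖⁻¹ * (s - θ)) (-‖lamT‖⁻¹) (Ioi x) x := by
        have := (((hasDerivAt_id x).sub_const θ).const_mul (-‖lamT‖⁻¹)).hasDerivWithinAt
          (s := Ioi x)
        simpa using this
      have heq : EqOn K (fun s : ℝ => -‖lamT‖⁻¹ * (s - θ)) (Ioi x) := by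
        intro s hs
        have : θ ≤ s := le_of_lt (lt_of_le_of_lt hx hs)
        simp [hK, abs_of_nonneg (sub_nonneg.mpr this)]
      have hxeq : K x = -‖lamT‖⁻¹ * (x - θ) := by
        simp [hK, abs_of_nonneg (sub_nonneg.mpr hx)]
      have := hd.congr heq hxeq
      simpa [hk, if_neg (not_lt.mpr hx)] using this
  have ftc : (∫ s in (0:ℝ)..t, k s) = K t - K 0 :=
    intervalIntegral.integral_eq_sub_of_hasDeriv_right_of_le ht0 hKcont hKderiv hkint
  rw [step1, step2, stepae, ftc]
  congr 1
  simp only [hK]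
  rw [zero_sub, abs_neg]
  field_simp
  ring
end

section
/- Let h_T : [0,∞) → ℝ^n be v-Lipschitz (v ≥ 0, v < 1), ℓ ≥ 0, and define ρ(t, h) = max(0, ‖h‖ − (t − 1 + e^{−t})) and τ(t) = t + (ρ(t, h_T(t)) − ℓ)/(1 + v) if ρ(t, h_T(t)) > ℓ, else τ(t) = t. Then the sequence t₀ = 0, t_{i+1} = τ(t_i) is non-decreasing, and if ρ(t, h_T(t)) > ℓ for all t in some interval [t_i, θ], then t_{i+1} ≤ θ whenever ρ(θ, h_T(θ)) ≤ ℓ; i.e., each iterate never exceeds the first time at which ρ(t, h_T(t)) ≤ ℓ. -/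
open Real

theorem stmt_18 (n : ℕ) (hT : ℝ → EuclideanSpace ℝ (Fin n))
    (v : ℝ) (hv : 0 ≤ v) (hv1 : v < 1)
    (hLip : LipschitzOnWith (Real.toNNReal v) hT (Set.Ici 0))
    (ℓ : ℝ) (hℓ : 0 ≤ ℓ)
    (ρ : ℝ → ℝ) (hρ : ∀ s : ℝ, ρ s = max 0 (‖hT s‖ - (s - 1 + Real.exp (-s))))
    (τ : ℝ → ℝ) (hτ : ∀ s : ℝ, τ s = if ℓ < ρ s then s + (ρ s - ℓ) / (1 + v) else s)
    (t : ℕ → ℝ) (ht0 : t 0 = 0) (hts : ∀ i : ℕ, t (i + 1) = τ (t i)) :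
    Monotone t ∧
      ∀ (i : ℕ) (θ : ℝ), t i ≤ θ →
        (∀ s ∈ Set.Ico (t i) θ, ℓ < ρ s) → ρ θ ≤ ℓ → t (i + 1) ≤ θ := by
  have h1v : (0:ℝ) < 1 + v := by linarith
  have hstep : ∀ s, s ≤ τ s := by
    intro s
    rw [hτ]
    split_ifs with h
    · have : 0 ≤ (ρ s - ℓ) / (1 + v) := div_nonneg (by linarith) h1v.le
      linarith
    · exact le_refl s
  have hmono : Monotone t :=
    monotone_nat_of_le_succ (fun i => by rw [hts]; exact hstep (t i))
  refine ⟨hmono, ?_⟩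
  intro i θ hle hint hθ
  have hti0 : 0 ≤ t i := ht0 ▸ hmono (Nat.zero_le i)
  rcases eq_or_lt_of_le hle with heq | hlt
  · rw [hts, hτ, if_neg (by rw [heq]; exact not_lt.mpr hθ)]
    exact hle
  · have hρti : ℓ < ρ (t i) := hint _ ⟨le_refl _, hlt⟩
    have hθ0 : 0 ≤ θ := le_trans hti0 hle
    have hdist : dist (hT (t i)) (hT θ) ≤ v * (θ - t i) := by
      have := hLip.dist_le_mul (t i) hti0 θ hθ0
      have hc : ((Real.toNNReal v : NNReal) : ℝ) = v := Real.coe_toNNReal v hv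
      rw [hc] at this
      calc dist (hT (t i)) (hT θ) ≤ v * dist (t i) θ := this
        _ = v * (θ - t i) := by
            rw [Real.dist_eq, abs_of_nonpos (by linarith)]; ring
    have hnormdiff : ‖hT (t i)‖ - ‖hT θ‖ ≤ v * (θ - t i) := by
      have := abs_norm_sub_norm_le (hT (t i)) (hT θ)
      rw [← dist_eq_norm] at this
      have := abs_le.mp this
      linarith [this.2, hdist]
    have hexp : Real.exp (-θ) ≤ Real.exp (-(t i)) :=
      Real.exp_le_exp.mpr (by linarith)
    have hρθ : ‖hT θ‖ - (θ - 1 + Real.exp (-θ)) ≤ ρ θ := by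
      rw [hρ]; exact le_max_right _ _
    have hpos : 0 < ‖hT (t i)‖ - (t i - 1 + Real.exp (-(t i))) := by
      by_contra h
      push_neg at h
      have : ρ (t i) = 0 := by rw [hρ]; exact max_eq_left h
      linarith
    have hρti' : ρ (t i) = ‖hT (t i)‖ - (t i - 1 + Real.exp (-(t i))) := by
      rw [hρ]; exact max_eq_right hpos.le
    have key : ρ (t i) - ℓ ≤ (1 + v) * (θ - t i) := by
      have hρθℓ : ρ θ ≤ ℓ := hθ
      nlinarith [hρθ, hρti', hnormdiff, hexp]
    rw [hts, hτ, if_pos hρti]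
    have : (ρ (t i) - ℓ) / (1 + v) ≤ θ - t i := by
      rw [div_le_iff₀ h1v]; linarith
    linarith
end
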